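/- arXiv:1702.06904 — 9 statements merged into one kernel-verified Lean document; each statement's English description precedes it below -/
import Mathlib

section
/- Let s = (s_k) be a sequence of real numbers. If sup over all pairs of integers n > ℓ ≥ 0 of ( (1/(n-ℓ)) ∑_{k=ℓ}^{n-1} e^{2 s_k} ) · ( (1/(n-ℓ)) ∑_{k=ℓ}^{n-1} e^{-2 s_k} ) is finite, then s has bounded mean oscillation: sup over n > ℓ ≥ 0 of (1/(n-ℓ)) ∑_{k=ℓ}^{n-1} |s_k − ⟨s⟩_{n,ℓ}| is finite, where ⟨s⟩_{n,ℓ} = (1/(n-ℓ)) ∑_{k=ℓ}^{n-1} s_k. -/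
lemma abs_le_half_cosh (t : ℝ) : |t| ≤ (Real.exp (2*t) + Real.exp (-(2*t))) / 2 := by
  rcases abs_cases t with ⟨h1, _⟩ | ⟨h1, _⟩ <;> rw [h1] <;>
    nlinarith [Real.add_one_le_exp (2*t), Real.add_one_le_exp (-(2*t)),
      Real.exp_pos (2*t), Real.exp_pos (-(2*t))]

theorem bmo_of_discrete_muckenhoupt (s : ℕ → ℝ)
    (h : ∃ C : ℝ, ∀ ℓ n : ℕ, ℓ < n →
      ((1 / ((n : ℝ) - ℓ)) * ∑ k ∈ Finset.Ico ℓ n, Real.exp (2 * s k)) *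
        ((1 / ((n : ℝ) - ℓ)) * ∑ k ∈ Finset.Ico ℓ n, Real.exp (-2 * s k)) ≤ C) :
    ∃ C : ℝ, ∀ ℓ n : ℕ, ℓ < n →
      (1 / ((n : ℝ) - ℓ)) *
        ∑ k ∈ Finset.Ico ℓ n,
          |s k - (1 / ((n : ℝ) - ℓ)) * ∑ i ∈ Finset.Ico ℓ n, s i| ≤ C := by
  obtain ⟨C, hC⟩ := h
  refine ⟨C, fun ℓ n hln => ?_⟩
  have hm : (0:ℝ) < (n:ℝ) - ℓ := by
    have : (ℓ:ℝ) < n := by exact_mod_cast hln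
    linarith
  set m : ℝ := (n:ℝ) - ℓ with hmdef
  have hcardR : ((Finset.Ico ℓ n).card : ℝ) = m := by
    rw [Nat.card_Ico, hmdef, Nat.cast_sub hln.le]
  have hw1 : ∑ _k ∈ Finset.Ico ℓ n, (1/m) = 1 := by
    rw [Finset.sum_const, nsmul_eq_mul, hcardR]
    field_simp
  have jensen : ∀ f : ℕ → ℝ, Real.exp ((1/m) * ∑ k ∈ Finset.Ico ℓ n, f k)
      ≤ (1/m) * ∑ k ∈ Finset.Ico ℓ n, Real.exp (f k) := by
    intro f
    have := convexOn_exp.map_sum_le (t := Finset.Ico ℓ n) (w := fun _ => 1/m)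
      (p := f) (fun _ _ => by positivity) hw1 (fun _ _ => Set.mem_univ _)
    simpa [smul_eq_mul, Finset.mul_sum] using this
  set a : ℝ := (1/m) * ∑ i ∈ Finset.Ico ℓ n, s i with hadef
  set A : ℝ := (1/m) * ∑ k ∈ Finset.Ico ℓ n, Real.exp (2 * s k) with hAdef
  set B : ℝ := (1/m) * ∑ k ∈ Finset.Ico ℓ n, Real.exp (-2 * s k) with hBdef
  have hAB : A * B ≤ C := hC ℓ n hln
  have hA0 : 0 ≤ A := by
    rw [hAdef]
    positivity
  have hB0 : 0 ≤ B := by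
    rw [hBdef]
    positivity
  have j1 : Real.exp (2 * a) ≤ A := by
    have e : (1/m) * ∑ k ∈ Finset.Ico ℓ n, (2 * s k) = 2 * a := by
      rw [hadef, Finset.mul_sum, Finset.mul_sum, Finset.mul_sum]
      exact Finset.sum_congr rfl fun k _ => by ring
    have := jensen (fun k => 2 * s k)
    rwa [e] at this
  have j2 : Real.exp (-(2 * a)) ≤ B := by
    have e : (1/m) * ∑ k ∈ Finset.Ico ℓ n, (-2 * s k) = -(2 * a) := by
      rw [hadef, show -(2 * ((1/m) * ∑ i ∈ Finset.Ico ℓ n, s i))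
          = (-2/m) * ∑ i ∈ Finset.Ico ℓ n, s i by ring, Finset.mul_sum, Finset.mul_sum]
      exact Finset.sum_congr rfl fun k _ => by ring
    have := jensen (fun k => -2 * s k)
    rwa [e] at this
  -- pointwise bound and sum
  have key : ∑ k ∈ Finset.Ico ℓ n, |s k - a| ≤
      ∑ k ∈ Finset.Ico ℓ n,
        (Real.exp (-(2*a)) * Real.exp (2 * s k) + Real.exp (2*a) * Real.exp (-2 * s k)) / 2 := by
    apply Finset.sum_le_sum
    intro k _
    have := abs_le_half_cosh (s k - a)
    calc |s k - a| ≤ (Real.exp (2*(s k - a)) + Real.exp (-(2*(s k - a)))) / 2 := this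
      _ = (Real.exp (-(2*a)) * Real.exp (2 * s k) + Real.exp (2*a) * Real.exp (-2 * s k)) / 2 := by
          rw [← Real.exp_add, ← Real.exp_add]; ring_nf
  have step : (1/m) * ∑ k ∈ Finset.Ico ℓ n, |s k - a| ≤
      (Real.exp (-(2*a)) * A + Real.exp (2*a) * B) / 2 := by
    have h2 : (1/m) * ∑ k ∈ Finset.Ico ℓ n,
        (Real.exp (-(2*a)) * Real.exp (2 * s k) + Real.exp (2*a) * Real.exp (-2 * s k)) / 2
        = (Real.exp (-(2*a)) * A + Real.exp (2*a) * B) / 2 := by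
      rw [hAdef, hBdef]
      simp only [Finset.mul_sum, ← Finset.sum_add_distrib, Finset.sum_div]
      exact Finset.sum_congr rfl fun k _ => by ring
    rw [← h2]
    apply mul_le_mul_of_nonneg_left key (by positivity)
  have final : (Real.exp (-(2*a)) * A + Real.exp (2*a) * B) / 2 ≤ A * B := by
    have h1 : Real.exp (-(2*a)) * A ≤ B * A :=
      mul_le_mul_of_nonneg_right j2 hA0
    have h2 : Real.exp (2*a) * B ≤ A * B :=
      mul_le_mul_of_nonneg_right j1 hB0
    nlinarith
  calc (1/m) * ∑ k ∈ Finset.Ico ℓ n, |s k - a| ≤ (Real.exp (-(2*a)) * A + Real.exp (2*a) * B) / 2 := step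
    _ ≤ A * B := final
    _ ≤ C := hAB
end

section
/- Define κ_j(r) = r!/(r−j)! for r ≥ j and κ_j(r) = 0 for r < j. There is a universal constant C such that for all integers n ≥ 1 and all integers j with 1 ≤ j ≤ n/2, letting n_j = ⌊(1 − 1/(j+1)) n⌋, one has κ_j(n)/κ_j(n_j) ≤ C. -/
/-- `κ_j(r) = r!/(r−j)!` for `r ≥ j` and `κ_j(r) = 0` for `r < j`. -/
noncomputable def kappa (j r : ℕ) : ℝ :=
  if j ≤ r then (r.factorial : ℝ) / ((r - j).factorial : ℝ) else 0

theorem kappa_ratio_bounded :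
    ∃ C : ℝ, ∀ n j : ℕ, 1 ≤ n → 1 ≤ j → 2 * j ≤ n →
      kappa j n / kappa j (n * j / (j + 1)) ≤ C := by
  use Real.exp 5
  intro n j hn hj h2j
  set m := n * j / (j + 1) with hm
  have hjm : j ≤ m := by
    rw [hm, Nat.le_div_iff_mul_le (by omega)]
    nlinarith
  have hjn : j ≤ n := by omega
  -- division facts
  have hdiv := Nat.div_add_mod (n * j) (j + 1)
  have hmodlt := Nat.mod_lt (n * j) (show 0 < j + 1 by omega)
  rw [← hm] at hdiv
  have h1 : (j + 1) * m ≤ n * j := by omega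
  have h2 : n * j < (j + 1) * m + (j + 1) := by omega
  have hmn : m ≤ n := by nlinarith
  have hkap : ∀ r : ℕ, j ≤ r → kappa j r = (r.descFactorial j : ℝ) := by
    intro r hr
    rw [kappa, if_pos hr, div_eq_iff (by positivity : (0:ℝ) < ((r - j).factorial : ℝ)).ne']
    rw [← Nat.cast_mul, mul_comm, Nat.factorial_mul_descFactorial hr]
  rw [hkap n hjn, hkap m hjm]
  have hdpos : 0 < (m.descFactorial j : ℝ) := by
    have := Nat.descFactorial_eq_zero_iff_lt (n := m) (k := j)
    have : m.descFactorial j ≠ 0 := by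
      intro h; have := this.mp h; omega
    positivity
  rw [div_le_iff₀ hdpos]
  rw [Nat.descFactorial_eq_prod_range, Nat.descFactorial_eq_prod_range]
  push_cast
  have hc : ∀ r : ℕ, j ≤ r → ∀ i ∈ Finset.range j, ((r - i : ℕ) : ℝ) = (r : ℝ) - i := by
    intro r hr i hi
    have : i ≤ r := by simp at hi; omega
    push_cast [this]; ring
  rw [Finset.prod_congr rfl (hc n hjn), Finset.prod_congr rfl (hc m hjm)]
  set t : ℝ := ((n : ℝ) - m) / ((m : ℝ) - j + 1) with ht
  have hmj1 : (0 : ℝ) < (m : ℝ) - j + 1 := by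
    have : (j : ℝ) ≤ m := by exact_mod_cast hjm
    linarith
  have hd0 : (0 : ℝ) ≤ (n : ℝ) - m := by
    have : (m : ℝ) ≤ n := by exact_mod_cast hmn
    linarith
  have ht0 : 0 ≤ t := by positivity
  have key : ∀ i ∈ Finset.range j, (n : ℝ) - i ≤ Real.exp t * ((m : ℝ) - i) := by
    intro i hi
    simp only [Finset.mem_range] at hi
    have hmi : (0 : ℝ) < (m : ℝ) - i := by
      have h1 : (i : ℝ) < j := by exact_mod_cast hi
      have h2 : (j : ℝ) ≤ m := by exact_mod_cast hjm
      linarith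
    have hle : ((n : ℝ) - m) / ((m : ℝ) - i) ≤ t := by
      rw [ht]
      apply div_le_div_of_nonneg_left hd0 hmj1
      · have h1 : (i : ℝ) < j := by exact_mod_cast hi
        have h1' : (i : ℝ) + 1 ≤ j := by exact_mod_cast hi
        linarith
    have h3 := Real.add_one_le_exp (((n : ℝ) - m) / ((m : ℝ) - i))
    have h4 : (n : ℝ) - i ≤ Real.exp (((n : ℝ) - m) / ((m : ℝ) - i)) * ((m : ℝ) - i) := by
      have := mul_le_mul_of_nonneg_right h3 hmi.le
      rw [add_mul, div_mul_cancel₀ _ hmi.ne'] at this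
      linarith
    calc (n : ℝ) - i ≤ _ := h4
      _ ≤ Real.exp t * ((m : ℝ) - i) :=
        mul_le_mul_of_nonneg_right (Real.exp_le_exp.mpr hle) hmi.le
  have hprodpos : ∀ i ∈ Finset.range j, (0:ℝ) ≤ (n : ℝ) - i := by
    intro i hi
    simp only [Finset.mem_range] at hi
    have h1 : (i : ℝ) < j := by exact_mod_cast hi
    have h2 : (j : ℝ) ≤ n := by exact_mod_cast hjn
    linarith
  calc ∏ i ∈ Finset.range j, ((n : ℝ) - i)
      ≤ ∏ i ∈ Finset.range j, Real.exp t * ((m : ℝ) - i) :=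
        Finset.prod_le_prod hprodpos key
    _ = Real.exp t ^ j * ∏ i ∈ Finset.range j, ((m : ℝ) - i) := by
        rw [Finset.prod_mul_distrib, Finset.prod_const, Finset.card_range]
    _ ≤ Real.exp 5 * ∏ i ∈ Finset.range j, ((m : ℝ) - i) := by
        apply mul_le_mul_of_nonneg_right _ ?_
        · rw [← Real.exp_nat_mul]
          apply Real.exp_le_exp.mpr
          rw [ht, ← mul_div_assoc, div_le_iff₀ hmj1]
          have h2' : n * j ≤ (j + 1) * m + j := by omega
          have c2 : (n:ℝ) * j ≤ ((j:ℝ) + 1) * m + j := by exact_mod_cast h2'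
          have c3 : 2 * (j:ℝ) ≤ n := by exact_mod_cast h2j
          have c4 : (1:ℝ) ≤ j := by exact_mod_cast hj
          have hT1 : (0:ℝ) ≤ ((j:ℝ) + 5) * (((j:ℝ) + 1) * m + j - n * j) := by
            apply mul_nonneg (by linarith) (by linarith)
          have hT2 : (0:ℝ) ≤ 4 * (j:ℝ) * ((n:ℝ) - 2 * j) := by
            apply mul_nonneg (by linarith) (by linarith)
          have hT3 : (0:ℝ) ≤ 2 * (j:ℝ) ^ 2 - 5 * j + 5 := by
            nlinarith [sq_nonneg (4 * (j:ℝ) - 5)]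
          have hkey : (j:ℝ) * ((n:ℝ) - m) * ((j:ℝ) + 1) ≤ 5 * ((m:ℝ) - j + 1) * ((j:ℝ) + 1) := by
            nlinarith [hT1, hT2, hT3]
          exact (mul_le_mul_iff_of_pos_right (show (0:ℝ) < (j:ℝ) + 1 by linarith)).mp hkey
        · apply Finset.prod_nonneg
          intro i hi
          simp only [Finset.mem_range] at hi
          have h1 : (i : ℝ) < j := by exact_mod_cast hi
          have h2 : (j : ℝ) ≤ m := by exact_mod_cast hjm
          linarith
end

section
/- For all integers n ≥ 1 and 1 ≤ j ≤ n, one has ∑_{r=j}^{n} (r!/(r−j)!)^2 ≤ (n/j) · (n!/(n−j)!)^2. -/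
theorem sum_sq_descFactorial_le (n j : ℕ) (hj : 1 ≤ j) (hjn : j ≤ n) :
    ∑ r ∈ Finset.Icc j n, ((r.factorial : ℝ) / ((r - j).factorial : ℝ)) ^ 2 ≤
      ((n : ℝ) / (j : ℝ)) * ((n.factorial : ℝ) / ((n - j).factorial : ℝ)) ^ 2 := by
  have hj0 : (0:ℝ) < (j:ℝ) := by exact_mod_cast hj
  induction n, hjn using Nat.le_induction with
  | base =>
      rw [Finset.Icc_self, Finset.sum_singleton, Nat.sub_self, Nat.factorial_zero,
        div_self (ne_of_gt hj0), one_mul]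
  | succ n hn ih =>
      rw [Finset.sum_Icc_succ_top (by omega : j ≤ n + 1)]
      have hnj : n + 1 - j = (n - j) + 1 := by omega
      have ha : (0:ℝ) < ((n - j).factorial : ℝ) := by exact_mod_cast (n-j).factorial_pos
      have hF : (0:ℝ) < (n.factorial : ℝ) := by exact_mod_cast n.factorial_pos
      have hx : ((n - j : ℕ) : ℝ) = (n : ℝ) - (j : ℝ) := by
        push_cast [Nat.cast_sub hn]; ring
      have hle : ∑ r ∈ Finset.Icc j n, ((r.factorial : ℝ) / ((r - j).factorial : ℝ)) ^ 2
          + ((n+1).factorial / ((n + 1 - j).factorial : ℝ)) ^ 2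
          ≤ ((n : ℝ) / (j : ℝ)) * ((n.factorial : ℝ) / ((n - j).factorial : ℝ)) ^ 2
          + ((n+1).factorial / ((n + 1 - j).factorial : ℝ)) ^ 2 := by
        linarith [ih]
      refine hle.trans ?_
      rw [hnj, Nat.factorial_succ (n - j), Nat.factorial_succ n]
      push_cast [Nat.cast_sub hn]
      have hx0 : (0:ℝ) ≤ (n : ℝ) - j := by
        rw [sub_nonneg]; exact_mod_cast hn
      have h1 : (n:ℝ) - j + 1 ≤ n := by
        have : (1:ℝ) ≤ j := by exact_mod_cast hj
        linarith
      have key : (n:ℝ)*((n:ℝ)-(j:ℝ)+1)^2 + (j:ℝ)*((n:ℝ)+1)^2 ≤ ((n:ℝ)+1)^3 := by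
        nlinarith [mul_nonneg hx0 hx0, mul_le_mul_of_nonneg_left h1 (Nat.cast_nonneg n : (0:ℝ) ≤ n)]
      rw [← sub_nonneg]
      have heq : ((n:ℝ)+1) / (j:ℝ) * (((n:ℝ)+1) * (n.factorial:ℝ) / ((((n:ℝ)-(j:ℝ)+1)) * ((n-j).factorial:ℝ)))^2
          - ((n:ℝ) / (j:ℝ) * ((n.factorial:ℝ) / ((n-j).factorial:ℝ))^2
            + (((n:ℝ)+1) * (n.factorial:ℝ) / ((((n:ℝ)-(j:ℝ)+1)) * ((n-j).factorial:ℝ)))^2)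
          = (n.factorial:ℝ)^2 / ((j:ℝ) * ((n-j).factorial:ℝ)^2 * (((n:ℝ)-(j:ℝ)+1))^2)
            * (((n:ℝ)+1)^3 - ((n:ℝ)*((n:ℝ)-(j:ℝ)+1)^2 + (j:ℝ)*((n:ℝ)+1)^2)) := by
        have hd : ((n:ℝ)-(j:ℝ)+1) ≠ 0 := by positivity
        field_simp
      rw [heq]
      exact mul_nonneg (by positivity) (by linarith)
end

section
/- Let (α_k)_{k≥0} be real numbers in (−1,1), and define polynomials Φ_n, Φ_n^* by Φ_0 = Φ_0^* = 1, Φ_{n+1}(z) = zΦ_n(z) − α_n Φ_n^*(z), Φ_{n+1}^*(z) = −α_n z Φ_n(z) + Φ_n^*(z). For integers n ≥ 0 and 0 ≤ j ≤ n+1, the pair of j-th derivatives (Φ_{n+1}^{(j)}(1), (Φ_{n+1}^*)^{(j)}(1))ᵀ equals j! times the sum over all multi-indices γ = (γ_0, …, γ_n) ∈ {0,1}^{n+1} with γ_0 + ⋯ + γ_n = j of the matrix product Π_{γ_n}(α_n) ⋯ Π_{γ_0}(α_0) applied to the vector (1,1)ᵀ, where Π_0(α) = [[1,−α],[−α,1]]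 and Π_1(α) = [[1,0],[−α,0]]. -/
/-- `Π_0(α) = [[1,−α],[−α,1]]` and `Π_1(α) = [[1,0],[−α,0]]`. -/
def PiMat (g : Fin 2) (a : ℝ) : Matrix (Fin 2) (Fin 2) ℝ :=
  if g = 0 then !![1, -a; -a, 1] else !![1, 0; -a, 0]


open Polynomial in
lemma iter_deriv_X_mul (P : Polynomial ℝ) (j : ℕ) :
    derivative^[j+1] (X * P) =
      (j+1) • derivative^[j] P + X * derivative^[j+1] P := by
  induction j with
  | zero => simp [derivative_mul]
  | succ j ih =>
    rw [Function.iterate_succ_apply', ih]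
    rw [map_add, map_nsmul, derivative_mul, derivative_X, one_mul]
    rw [show derivative ((derivative)^[j+1] P) = (derivative)^[j+2] P from
      (Function.iterate_succ_apply' Polynomial.derivative (j+1) P).symm]
    rw [show derivative ((derivative)^[j] P) = (derivative)^[j+1] P from
      (Function.iterate_succ_apply' Polynomial.derivative j P).symm]
    rw [succ_nsmul ((derivative)^[j+1] P) (j+1)]
    abel

lemma list_prod_split {M : Type*} [Monoid M] (n : ℕ) (f : Fin (n+1) → M) :
    ((List.finRange (n+1)).reverse.map f).prod =
      f (Fin.last n) * ((List.finRange n).reverse.map (fun i => f i.castSucc)).prod := by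
  rw [List.finRange_succ_last]
  simp [List.map_reverse, Function.comp_def]

-- sum split test
def Ssum (α : ℕ → ℝ) (n j : ℕ) : Fin 2 → ℝ :=
  ∑ γ ∈ Finset.univ.filter
      (fun γ : Fin (n + 1) → Fin 2 => ∑ i, (γ i : ℕ) = j),
    (((List.finRange (n + 1)).reverse.map
        (fun i => PiMat (γ i) (α i))).prod).mulVec ![1, 1]

lemma Ssum_succ (α : ℕ → ℝ) (n j : ℕ) :
    Ssum α (n+1) j = (PiMat 0 (α (n+1))).mulVec (Ssum α n j)
      + if j = 0 then 0 else (PiMat 1 (α (n+1))).mulVec (Ssum α n (j-1)) := by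
  unfold Ssum
  rw [Finset.sum_filter]
  rw [← Equiv.sum_comp (Fin.snocEquiv (fun _ => Fin 2))]
  rw [Fintype.sum_prod_type]
  rw [Fin.sum_univ_two]
  have hsum : ∀ (g : Fin 2) (γ : Fin (n+1) → Fin 2),
      (∑ i : Fin (n+2), ((Fin.snocEquiv (fun _ => Fin 2) (g, γ)) i : ℕ))
        = (∑ i : Fin (n+1), (γ i : ℕ)) + (g : ℕ) := by
    intro g γ
    rw [Fin.sum_univ_castSucc]
    simp [Fin.snocEquiv]
  have hprod : ∀ (g : Fin 2) (γ : Fin (n+1) → Fin 2),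
      ((List.finRange (n+2)).reverse.map
          (fun i => PiMat ((Fin.snocEquiv (fun _ => Fin 2) (g, γ)) i) (α i))).prod
        = PiMat g (α (n+1)) *
          ((List.finRange (n+1)).reverse.map (fun i => PiMat (γ i) (α i))).prod := by
    intro g γ
    rw [list_prod_split]
    simp [Fin.snocEquiv]
  have pull : ∀ (A : Matrix (Fin 2) (Fin 2) ℝ) (P : (Fin (n+1) → Fin 2) → Prop)
      [DecidablePred P] (t : (Fin (n+1) → Fin 2) → Fin 2 → ℝ),
      (∑ γ : Fin (n+1) → Fin 2, if P γ then A.mulVec (t γ) else 0)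
        = A.mulVec (∑ γ ∈ Finset.univ.filter P, t γ) := by
    intro A P _ t
    rw [Finset.sum_filter, ← Matrix.mulVecLin_apply, map_sum]
    refine Finset.sum_congr rfl fun γ _ => ?_
    by_cases h : P γ <;> simp [h, Matrix.mulVecLin_apply]
  simp_rw [hsum, hprod, ← Matrix.mulVec_mulVec, Fin.val_zero, add_zero, Fin.val_one]
  cases j with
  | zero =>
    rw [pull]
    simp
  | succ j =>
    simp_rw [Nat.succ_ne_zero, if_false, Nat.succ_sub_one, Nat.succ_inj]
    rw [pull, pull]

lemma Ssum_zero (α : ℕ → ℝ) (j : ℕ) :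
    Ssum α 0 j = if j = 0 then (PiMat 0 (α 0)).mulVec ![1,1]
      else if j = 1 then (PiMat 1 (α 0)).mulVec ![1,1] else 0 := by
  unfold Ssum
  rw [Finset.sum_filter, ← Equiv.sum_comp (Equiv.funUnique (Fin 1) (Fin 2)).symm,
    Fin.sum_univ_two]
  have hl : (List.finRange 1) = [0] := rfl
  simp only [hl, Equiv.funUnique, Equiv.coe_fn_symm_mk, List.reverse_cons, List.reverse_nil,
    List.nil_append, List.map_cons, List.map_nil, List.prod_cons, List.prod_nil, mul_one,
    Fin.sum_univ_one, Fin.val_zero, Fin.val_one]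
  rcases j with _ | _ | j <;> simp

open Polynomial in
lemma main_lemma (α : ℕ → ℝ) (Φ Φs : ℕ → Polynomial ℝ)
    (h0 : Φ 0 = 1) (h0s : Φs 0 = 1)
    (hrec : ∀ n, Φ (n + 1) = X * Φ n - C (α n) * Φs n)
    (hrecs : ∀ n, Φs (n + 1) = -(C (α n)) * X * Φ n + Φs n) :
    ∀ n j : ℕ,
      (![(derivative^[j] (Φ (n + 1))).eval 1,
          (derivative^[j] (Φs (n + 1))).eval 1] : Fin 2 → ℝ) =
        (j.factorial : ℝ) • Ssum α n j := by
  intro n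
  induction n with
  | zero =>
    intro j
    have hΦ1 : Φ 1 = X - C (α 0) := by rw [hrec 0, h0, h0s]; ring
    have hΦs1 : Φs 1 = -(C (α 0)) * X + 1 := by rw [hrecs 0, h0, h0s]; ring
    rw [hΦ1, hΦs1, Ssum_zero]
    rcases j with _ | _ | j
    · funext i
      fin_cases i <;>
        (simp [PiMat, Matrix.mulVec, dotProduct, Fin.sum_univ_two]; try ring)
    · funext i
      fin_cases i <;>
        (simp [PiMat, Matrix.mulVec, dotProduct, Fin.sum_univ_two, Nat.factorial]; try ring)
    · have e1 : derivative^[j+2] (X - C (α 0)) = 0 := by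
        rw [show j+2 = j+1+1 from rfl, Function.iterate_succ_apply]
        rw [show derivative (X - C (α 0)) = (1 : ℝ[X]) by simp]
        exact iterate_derivative_one (Nat.succ_pos j)
      have e2 : derivative^[j+2] (-(C (α 0)) * X + 1) = 0 := by
        rw [show j+2 = j+1+1 from rfl, Function.iterate_succ_apply]
        rw [show derivative (-(C (α 0)) * X + 1) = C (-(α 0)) * (1 : ℝ[X]) by
          simp [derivative_mul]]
        rw [iterate_derivative_C_mul, iterate_derivative_one (Nat.succ_pos j), mul_zero]
      rw [e1, e2]
      funext i
      fin_cases i <;> simp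
  | succ n ih =>
    intro j
    have hP : Φ (n+2) = X * Φ (n+1) - C (α (n+1)) * Φs (n+1) := hrec (n+1)
    have hPs : Φs (n+2) = Φs (n+1) - C (α (n+1)) * (X * Φ (n+1)) := by
      rw [hrecs (n+1)]; ring
    rcases j with _ | j
    · have i0 := congrFun (ih 0) 0
      have i1 := congrFun (ih 0) 1
      simp only [Matrix.cons_val_zero, Matrix.cons_val_one, Matrix.head_cons, Pi.smul_apply,
        smul_eq_mul, Nat.factorial_zero, Nat.cast_one, one_mul,
        Function.iterate_zero_apply] at i0 i1
      rw [Ssum_succ, if_pos rfl, add_zero]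
      funext i
      fin_cases i <;>
        · simp [hP, hPs, PiMat, Matrix.mulVec, dotProduct, Fin.sum_univ_two, i0, i1]
          try ring
    · have hX := iter_deriv_X_mul (Φ (n+1)) j
      have dP : (derivative^[j+1] (Φ (n+2))).eval 1
          = ((j:ℝ)+1) * (derivative^[j] (Φ (n+1))).eval 1
            + (derivative^[j+1] (Φ (n+1))).eval 1
            - α (n+1) * (derivative^[j+1] (Φs (n+1))).eval 1 := by
        rw [hP, iterate_derivative_sub, iterate_derivative_C_mul, hX]
        simp [nsmul_eq_mul]
        try ring
      have dPs : (derivative^[j+1] (Φs (n+2))).eval 1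
          = -(α (n+1)) * (((j:ℝ)+1) * (derivative^[j] (Φ (n+1))).eval 1
              + (derivative^[j+1] (Φ (n+1))).eval 1)
            + (derivative^[j+1] (Φs (n+1))).eval 1 := by
        rw [hPs, iterate_derivative_sub, iterate_derivative_C_mul, hX]
        simp [nsmul_eq_mul]
        try ring
      have a0 := congrFun (ih j) 0
      have a1 := congrFun (ih j) 1
      have b0 := congrFun (ih (j+1)) 0
      have b1 := congrFun (ih (j+1)) 1
      simp only [Matrix.cons_val_zero, Matrix.cons_val_one, Matrix.head_cons, Pi.smul_apply,
        smul_eq_mul] at a0 a1 b0 b1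
      rw [Ssum_succ]
      simp only [Nat.succ_ne_zero, if_false, Nat.succ_sub_one]
      funext i
      have mv : ∀ (A : Matrix (Fin 2) (Fin 2) ℝ) (v : Fin 2 → ℝ) (i : Fin 2),
          A.mulVec v i = A i 0 * v 0 + A i 1 * v 1 := by
        intro A v i
        simp [Matrix.mulVec, dotProduct, Fin.sum_univ_two]
      have p0 : PiMat 0 (α (n+1)) = !![1, -α (n+1); -α (n+1), 1] := rfl
      have p1 : PiMat 1 (α (n+1)) = !![1, 0; -α (n+1), 0] := rfl
      fin_cases i <;>
        · simp only [Fin.zero_eta, Fin.mk_one, Fin.isValue, Matrix.cons_val_zero,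
            Matrix.cons_val_one, Matrix.head_cons, Pi.smul_apply, Pi.add_apply, smul_eq_mul,
            dP, dPs, a0, a1, b0, b1, mv, p0, p1, Matrix.of_apply, Matrix.cons_val',
            Matrix.empty_val', Matrix.cons_val_fin_one, Matrix.head_fin_const]
          push_cast [Nat.factorial_succ]
          ring

theorem derivatives_via_multiindex_sum (α : ℕ → ℝ) (hα : ∀ k, |α k| < 1)
    (Φ Φs : ℕ → Polynomial ℝ)
    (h0 : Φ 0 = 1) (h0s : Φs 0 = 1)
    (hrec : ∀ n, Φ (n + 1) = Polynomial.X * Φ n - Polynomial.C (α n) * Φs n)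
    (hrecs : ∀ n, Φs (n + 1) = -(Polynomial.C (α n)) * Polynomial.X * Φ n + Φs n) :
    ∀ n j : ℕ, j ≤ n + 1 →
      (![(Polynomial.derivative^[j] (Φ (n + 1))).eval 1,
          (Polynomial.derivative^[j] (Φs (n + 1))).eval 1] : Fin 2 → ℝ) =
        (j.factorial : ℝ) •
          ∑ γ ∈ Finset.univ.filter
              (fun γ : Fin (n + 1) → Fin 2 => ∑ i, (γ i : ℕ) = j),
            (((List.finRange (n + 1)).reverse.map
                (fun i => PiMat (γ i) (α i))).prod).mulVec ![1, 1] := by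
  intro n j hj
  exact main_lemma α Φ Φs h0 h0s hrec hrecs n j
end

section
/- With the setup of the previous lemma and h(r) = ∏_{k=0}^{r-1} (1−α_k)/(1+α_k) (and h(0)=1), for all integers n ≥ 0 and 1 ≤ j ≤ n+1 one has Φ_{n+1}^{(j)}(1) = (j!/2^j) · ∏_{t=0}^{n} (1−α_t) · ∑_{t_1=0}^{n} ∑_{t_2=0}^{t_1−1} ⋯ ∑_{t_j=0}^{t_{j-1}−1} ∏_{s=1}^{j} (1 + h(t_s)/h(t_{s-1})), where t_0 = n+1 and each inner sum over t_s ranges over 0 ≤ t_s < t_{s-1} (being 0 if empty). -/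
open Polynomial Finset


theorem derivative_formula_at_one (α : ℕ → ℝ) (hα : ∀ k, |α k| < 1)
    (Φ Φs : ℕ → Polynomial ℝ)
    (h0 : Φ 0 = 1) (h0s : Φs 0 = 1)
    (hrec : ∀ n, Φ (n + 1) = Polynomial.X * Φ n - Polynomial.C (α n) * Φs n)
    (hrecs : ∀ n, Φs (n + 1) = -(Polynomial.C (α n)) * Polynomial.X * Φ n + Φs n)
    (h : ℕ → ℝ) (hh : ∀ r, h r = ∏ k ∈ Finset.range r, (1 - α k) / (1 + α k))
    -- `F j t₀` is the iterated sum `∑_{t_1 < t₀} ∑_{t_2 < t_1} ⋯ ∑_{t_j < t_{j-1}}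
    -- ∏_{s=1}^{j} (1 + h(t_s)/h(t_{s-1}))`.
    (F : ℕ → ℕ → ℝ) (hF0 : ∀ t, F 0 t = 1)
    (hFs : ∀ j t₀, F (j + 1) t₀ = ∑ t ∈ Finset.range t₀, (1 + h t / h t₀) * F j t) :
    ∀ n j : ℕ, 1 ≤ j → j ≤ n + 1 →
      (Polynomial.derivative^[j] (Φ (n + 1))).eval 1 =
        ((j.factorial : ℝ) / 2 ^ j) * (∏ t ∈ Finset.range (n + 1), (1 - α t)) *
          F j (n + 1) := by
  have hm : ∀ k, (0:ℝ) < 1 - α k := fun k => by have := (abs_lt.mp (hα k)).2; linarith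
  have hp : ∀ k, (0:ℝ) < 1 + α k := fun k => by have := (abs_lt.mp (hα k)).1; linarith
  have hpos : ∀ r, 0 < h r := fun r => by
    rw [hh]; exact Finset.prod_pos fun k _ => div_pos (hm k) (hp k)
  have hstep : ∀ n, h (n+1) = h n * ((1 - α n)/(1 + α n)) := fun n => by
    rw [hh, hh, Finset.prod_range_succ]
  have hFz : ∀ j t, t < j → F j t = 0 := by
    intro j
    induction j with
    | zero => intro t ht; exact absurd ht (Nat.not_lt_zero t)
    | succ j ih =>
      intro t ht
      rw [hFs]
      refine Finset.sum_eq_zero fun s hs => ?_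
      rw [ih s (by have := Finset.mem_range.mp hs; omega), mul_zero]
  -- iterated derivative of X * p
  have iterX : ∀ (j : ℕ) (p : Polynomial ℝ), Polynomial.derivative^[j+1] (Polynomial.X * p)
      = Polynomial.X * Polynomial.derivative^[j+1] p
        + Polynomial.C ((j:ℝ)+1) * Polynomial.derivative^[j] p := by
    intro j
    induction j with
    | zero => intro p; simp [derivative_mul]; ring
    | succ j ih =>
      intro p
      rw [Function.iterate_succ_apply', ih, derivative_add, derivative_mul, derivative_mul,
        derivative_C, ← Function.iterate_succ_apply' Polynomial.derivative (j+1),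
        ← Function.iterate_succ_apply' Polynomial.derivative j]
      simp only [Nat.succ_eq_add_one, derivative_X, Polynomial.C_add, Polynomial.C_1,
        Nat.cast_add, Nat.cast_one]
      ring
  -- key sum identities
  have keyF : ∀ j n, (1 - α n) * F (j+1) (n+1)
      = F (j+1) n + 2 * F j n - α n * (∑ t ∈ Finset.range n, (1 - h t / h n) * F j t) := by
    intro j n
    have e : ∀ t, (1 - α n) * ((1 + h t / h (n+1)) * F j t)
        = (1 + h t / h n) * F j t - α n * ((1 - h t / h n) * F j t) := by
      intro t
      have h1 : h n ≠ 0 := (hpos n).ne'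
      have h2 : (1:ℝ) - α n ≠ 0 := (hm n).ne'
      have h3 : (1:ℝ) + α n ≠ 0 := (hp n).ne'
      rw [hstep n]
      field_simp
      ring
    calc (1 - α n) * F (j+1) (n+1)
        = ∑ t ∈ Finset.range (n+1),
            ((1 + h t / h n) * F j t - α n * ((1 - h t / h n) * F j t)) := by
          rw [hFs j (n+1), Finset.mul_sum]
          exact Finset.sum_congr rfl fun t _ => e t
      _ = _ := by
          rw [Finset.sum_range_succ, Finset.sum_sub_distrib, ← Finset.mul_sum, hFs j n,
            div_self (hpos n).ne']
          ring
  have keyG : ∀ j n, (1 - α n) * (∑ t ∈ Finset.range (n+1), (1 - h t / h (n+1)) * F j t)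
      = -(α n) * F (j+1) n - 2 * α n * F j n
        + ∑ t ∈ Finset.range n, (1 - h t / h n) * F j t := by
    intro j n
    have e : ∀ t, (1 - α n) * ((1 - h t / h (n+1)) * F j t)
        = -(α n) * ((1 + h t / h n) * F j t) + (1 - h t / h n) * F j t := by
      intro t
      have h1 : h n ≠ 0 := (hpos n).ne'
      have h2 : (1:ℝ) - α n ≠ 0 := (hm n).ne'
      have h3 : (1:ℝ) + α n ≠ 0 := (hp n).ne'
      rw [hstep n]
      field_simp
      ring
    calc (1 - α n) * (∑ t ∈ Finset.range (n+1), (1 - h t / h (n+1)) * F j t)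
        = ∑ t ∈ Finset.range (n+1),
            (-(α n) * ((1 + h t / h n) * F j t) + (1 - h t / h n) * F j t) := by
          rw [Finset.mul_sum]
          exact Finset.sum_congr rfl fun t _ => e t
      _ = _ := by
          rw [Finset.sum_range_succ, Finset.sum_add_distrib, ← Finset.mul_sum, hFs j n,
            div_self (hpos n).ne']
          ring
  have hfact : ∀ j : ℕ, ((j+1).factorial : ℝ) = ((j:ℝ)+1) * (j.factorial : ℝ) := by
    intro j; rw [Nat.factorial_succ]; push_cast; ring
  -- the main joint induction
  have key : ∀ n, (∀ j, (Polynomial.derivative^[j] (Φ n)).eval 1 * 2^j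
        = (j.factorial : ℝ) * (∏ t ∈ Finset.range n, (1 - α t)) * F j n)
      ∧ ((Φs n).eval 1 = ∏ t ∈ Finset.range n, (1 - α t))
      ∧ (∀ j, (Polynomial.derivative^[j+1] (Φs n)).eval 1 * 2^(j+1)
        = ((j+1).factorial : ℝ) * (∏ t ∈ Finset.range n, (1 - α t))
          * ∑ t ∈ Finset.range n, (1 - h t / h n) * F j t) := by
    intro n
    induction n with
    | zero =>
      refine ⟨fun j => ?_, by simp [h0s], fun j => ?_⟩
      · cases j with
        | zero => simp [h0, hF0]
        | succ j =>
          simp [h0, Polynomial.iterate_derivative_one (Nat.succ_pos j),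
            hFz (j+1) 0 (Nat.succ_pos j)]
      · simp [h0s, Polynomial.iterate_derivative_one (Nat.succ_pos j)]
    | succ n ih =>
      obtain ⟨ih1, ih2, ih3⟩ := ih
      have hA0 : (Φ n).eval 1 = ∏ t ∈ Finset.range n, (1 - α t) := by
        have := ih1 0
        simpa [hF0] using this
      have eΦ : ∀ j : ℕ, (Polynomial.derivative^[j+1] (Φ (n+1))).eval 1
          = (Polynomial.derivative^[j+1] (Φ n)).eval 1
            + ((j:ℝ)+1) * (Polynomial.derivative^[j] (Φ n)).eval 1
            - α n * (Polynomial.derivative^[j+1] (Φs n)).eval 1 := by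
        intro j
        rw [hrec n, Polynomial.iterate_derivative_sub, Polynomial.iterate_derivative_C_mul,
          iterX j (Φ n)]
        simp
      have eΦs : ∀ j : ℕ, (Polynomial.derivative^[j+1] (Φs (n+1))).eval 1
          = -(α n) * ((Polynomial.derivative^[j+1] (Φ n)).eval 1
              + ((j:ℝ)+1) * (Polynomial.derivative^[j] (Φ n)).eval 1)
            + (Polynomial.derivative^[j+1] (Φs n)).eval 1 := by
        intro j
        have hre : Φs (n+1) = Polynomial.C (-(α n)) * (Polynomial.X * Φ n) + Φs n := by
          rw [hrecs n, map_neg]; ring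
        rw [hre, iterate_map_add, Polynomial.iterate_derivative_C_mul,
          iterX j (Φ n)]
        simp
      refine ⟨fun j => ?_, ?_, fun j => ?_⟩
      · cases j with
        | zero =>
          simp only [Function.iterate_zero_apply, pow_zero, mul_one, Nat.factorial_zero,
            Nat.cast_one, one_mul, hF0]
          rw [hrec n, Finset.prod_range_succ]
          simp [hA0, ih2]
          ring
        | succ j =>
          have a1 := ih1 (j+1)
          have a0 := ih1 j
          have b1 := ih3 j
          have kF := keyF j n
          rw [eΦ j, Finset.prod_range_succ, hfact j] at *
          linear_combination a1 + 2*((j:ℝ)+1) * a0 - α n * b1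
            - (((j:ℝ)+1) * (j.factorial:ℝ) * ∏ t ∈ Finset.range n, (1 - α t)) * kF
      · rw [hrecs n, Finset.prod_range_succ]
        simp [hA0, ih2]
        ring
      · have a1 := ih1 (j+1)
        have a0 := ih1 j
        have b1 := ih3 j
        have kG := keyG j n
        rw [eΦs j, Finset.prod_range_succ, hfact j] at *
        linear_combination -(α n) * a1 - 2*α n*((j:ℝ)+1) * a0 + b1
          - (((j:ℝ)+1) * (j.factorial:ℝ) * ∏ t ∈ Finset.range n, (1 - α t)) * kG
  intro n j _ _
  have hk := (key (n+1)).1 j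
  have h2 : (2:ℝ)^j ≠ 0 := by positivity
  field_simp
  linear_combination hk
end

section
/- Let μ = w·dm + μ_s be a measure on the unit circle in the Steklov class (inf_T w > 0), and for n ≥ 0 let H²(μ,n) be the space of analytic polynomials of degree at most n with the L²(μ) inner product, with reproducing kernel k_{ζ,μ,n}. Then there exists a constant c (depending only on μ) such that ‖∂̄^j k_{1,μ,n}‖²_{L²(μ)} ≤ c · ‖∂̄^j k_{1,m,n}‖²_{L²(m)} for all n ≥ 0 and 0 ≤ j ≤ n, where ∂̄^j denotes the j-th derivative of the anti-analytic map ζ ↦ k_{ζ,·,n} evaluated at ζ = 1, and m is normalized Lebesgue measure on the circle. -/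
open MeasureTheory

/-- Parametrization of the unit circle: `θ ↦ e^{iθ}`. -/
noncomputable def circlePt (θ : ℝ) : ℂ := Complex.exp (θ * Complex.I)

/-- The kernel `K(ζ,z) = ∑_{p,q ≤ n} c p q · z^p · (conj ζ)^q`, a polynomial of degree
at most `n` in `z` and anti-analytic polynomial of degree at most `n` in `ζ`. -/
noncomputable def kernelFun (n : ℕ) (c : ℕ → ℕ → ℂ) (ζ z : ℂ) : ℂ :=
  ∑ p ∈ Finset.range (n + 1), ∑ q ∈ Finset.range (n + 1),
    c p q * z ^ p * (starRingEnd ℂ ζ) ^ q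

/-- `c` encodes the reproducing kernel of the space of analytic polynomials of degree
at most `n` in `L²(ν)` (circle parametrized by `θ ∈ (0, 2π]`). -/
def IsRepKernel (ν : Measure ℝ) (n : ℕ) (c : ℕ → ℕ → ℂ) : Prop :=
  ∀ f : Polynomial ℂ, f.natDegree ≤ n → ∀ ζ : ℂ,
    ∫ θ, f.eval (circlePt θ) * (starRingEnd ℂ) (kernelFun n c ζ (circlePt θ)) ∂ν = f.eval ζ

/-- The `j`-th derivative in `conj ζ` of `ζ ↦ K(ζ, z)` evaluated at `ζ = 1`:
`∂̄^j k_{1,ν,n}(z) = ∑_{p,q} c p q · q!/(q−j)! · z^p`. -/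
noncomputable def dbarKernel (n j : ℕ) (c : ℕ → ℕ → ℂ) (z : ℂ) : ℂ :=
  ∑ p ∈ Finset.range (n + 1), ∑ q ∈ Finset.range (n + 1),
    c p q * (q.descFactorial j : ℂ) * z ^ p

lemma continuous_circlePt : Continuous circlePt := by
  unfold circlePt; fun_prop

lemma circlePt_mem_sphere (θ : ℝ) : circlePt θ ∈ Metric.sphere (0:ℂ) 1 := by
  simp [circlePt, mem_sphere_zero_iff_norm, Complex.norm_exp]

lemma integrable_comp_circle {E : Type*} [NormedAddCommGroup E]
    (ν : Measure ℝ) [IsFiniteMeasure ν] {h : ℂ → E} (hh : Continuous h) :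
    Integrable (fun θ => h (circlePt θ)) ν := by
  obtain ⟨C, hC⟩ := (isCompact_sphere (0:ℂ) 1).exists_bound_of_continuousOn hh.continuousOn
  exact (integrable_const C).mono'
    ((hh.comp continuous_circlePt).aestronglyMeasurable)
    (Filter.Eventually.of_forall fun θ => hC _ (circlePt_mem_sphere θ))

lemma continuous_dbarKernel (n j : ℕ) (c : ℕ → ℕ → ℂ) :
    Continuous (dbarKernel n j c) := by
  unfold dbarKernel
  exact continuous_finset_sum _ fun p _ => continuous_finset_sum _ fun q _ =>
    continuous_const.mul (continuous_pow p)

lemma integral_poly_mul_sum (ν : Measure ℝ) [IsFiniteMeasure ν] (n : ℕ)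
    (f : Polynomial ℂ) (d : ℕ → ℕ → ℂ) :
    ∫ θ, f.eval (circlePt θ) * (∑ p ∈ Finset.range (n+1), ∑ q ∈ Finset.range (n+1),
        d p q * (starRingEnd ℂ) (circlePt θ) ^ p) ∂ν
      = ∑ p ∈ Finset.range (n+1), ∑ q ∈ Finset.range (n+1),
          d p q * ∫ θ, f.eval (circlePt θ) * (starRingEnd ℂ) (circlePt θ) ^ p ∂ν := by
  have hcont : ∀ p : ℕ, Continuous fun z : ℂ => f.eval z * (starRingEnd ℂ) z ^ p :=
    fun p => (f.continuous).mul (continuous_star.pow p)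
  have hstep : ∀ θ, f.eval (circlePt θ) * (∑ p ∈ Finset.range (n+1), ∑ q ∈ Finset.range (n+1),
        d p q * (starRingEnd ℂ) (circlePt θ) ^ p)
      = ∑ p ∈ Finset.range (n+1), ∑ q ∈ Finset.range (n+1),
          d p q * (f.eval (circlePt θ) * (starRingEnd ℂ) (circlePt θ) ^ p) := by
    intro θ
    rw [Finset.mul_sum]
    refine Finset.sum_congr rfl fun p _ => ?_
    rw [Finset.mul_sum]
    exact Finset.sum_congr rfl fun q _ => by ring
  simp_rw [hstep]
  rw [integral_finset_sum]
  · refine Finset.sum_congr rfl fun p _ => ?_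
    rw [integral_finset_sum]
    · exact Finset.sum_congr rfl fun q _ => integral_const_mul _ _
    · intro q _
      exact (integrable_comp_circle ν (hcont p)).const_mul _
  · intro p _
    exact integrable_finset_sum _ fun q _ =>
      (integrable_comp_circle ν (hcont p)).const_mul _

lemma repKernel_integral (ν : Measure ℝ) [IsFiniteMeasure ν] (n j : ℕ) (c : ℕ → ℕ → ℂ)
    (hrep : IsRepKernel ν n c) (f : Polynomial ℂ) (hf : f.natDegree ≤ n) :
    ∫ θ, f.eval (circlePt θ) * (starRingEnd ℂ) (dbarKernel n j c (circlePt θ)) ∂ν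
      = ∑ q ∈ Finset.range (n+1), (q.descFactorial j : ℂ) * f.coeff q := by
  set I : ℕ → ℂ := fun p => ∫ θ, f.eval (circlePt θ) * (starRingEnd ℂ) (circlePt θ) ^ p ∂ν
    with hI
  set a : ℕ → ℂ := fun q => ∑ p ∈ Finset.range (n+1), (starRingEnd ℂ) (c p q) * I p with ha
  have hζ : ∀ ζ : ℂ, (∑ q ∈ Finset.range (n+1), a q * ζ ^ q) = f.eval ζ := by
    intro ζ
    have hconjK : ∀ z : ℂ, (starRingEnd ℂ) (kernelFun n c ζ z)
        = ∑ p ∈ Finset.range (n+1), ∑ q ∈ Finset.range (n+1),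
            ((starRingEnd ℂ) (c p q) * ζ ^ q) * (starRingEnd ℂ) z ^ p := by
      intro z
      unfold kernelFun
      rw [map_sum]
      refine Finset.sum_congr rfl fun p _ => ?_
      rw [map_sum]
      refine Finset.sum_congr rfl fun q _ => ?_
      simp only [map_mul, map_pow, Complex.conj_conj]
      ring
    have h1 := hrep f hf ζ
    rw [show (fun θ => f.eval (circlePt θ) * (starRingEnd ℂ) (kernelFun n c ζ (circlePt θ)))
        = fun θ => f.eval (circlePt θ) * (∑ p ∈ Finset.range (n+1), ∑ q ∈ Finset.range (n+1),
            ((starRingEnd ℂ) (c p q) * ζ ^ q) * (starRingEnd ℂ) (circlePt θ) ^ p)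
      from funext fun θ => by rw [hconjK]] at h1
    rw [integral_poly_mul_sum] at h1
    rw [← h1, Finset.sum_comm]
    refine Finset.sum_congr rfl fun q _ => ?_
    rw [ha]
    simp only [Finset.sum_mul]
    exact Finset.sum_congr rfl fun p _ => by ring
  have hPf : (∑ q ∈ Finset.range (n+1), Polynomial.C (a q) * Polynomial.X ^ q) = f := by
    apply Polynomial.funext
    intro ζ
    rw [Polynomial.eval_finset_sum]
    simpa using hζ ζ
  have hcoeff : ∀ q ∈ Finset.range (n+1), f.coeff q = a q := by
    intro q hq
    rw [← hPf, Polynomial.finset_sum_coeff]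
    simp only [Polynomial.coeff_C_mul, Polynomial.coeff_X_pow, mul_ite, mul_one, mul_zero]
    rw [Finset.sum_ite_eq (Finset.range (n+1)) q a, if_pos hq]
  have hconjD : ∀ z : ℂ, (starRingEnd ℂ) (dbarKernel n j c z)
      = ∑ p ∈ Finset.range (n+1), ∑ q ∈ Finset.range (n+1),
          ((starRingEnd ℂ) (c p q) * (q.descFactorial j : ℂ)) * (starRingEnd ℂ) z ^ p := by
    intro z
    unfold dbarKernel
    rw [map_sum]
    refine Finset.sum_congr rfl fun p _ => ?_
    rw [map_sum]
    refine Finset.sum_congr rfl fun q _ => ?_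
    simp only [map_mul, map_pow, map_natCast]
  rw [show (fun θ => f.eval (circlePt θ) * (starRingEnd ℂ) (dbarKernel n j c (circlePt θ)))
      = fun θ => f.eval (circlePt θ) * (∑ p ∈ Finset.range (n+1), ∑ q ∈ Finset.range (n+1),
          ((starRingEnd ℂ) (c p q) * (q.descFactorial j : ℂ)) * (starRingEnd ℂ) (circlePt θ) ^ p)
    from funext fun θ => by rw [hconjD]]
  rw [integral_poly_mul_sum, Finset.sum_comm]
  refine Finset.sum_congr rfl fun q hq => ?_
  rw [hcoeff q hq, ha]
  simp only [Finset.mul_sum]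
  exact Finset.sum_congr rfl fun p _ => by ring

lemma norm_smul_sub_sq (ε : ℝ) (a b : ℂ) :
    ‖(ε:ℂ) * a - b‖^2 = ε^2 * ‖a‖^2 - 2*ε*(a * (starRingEnd ℂ) b).re + ‖b‖^2 := by
  simp only [Complex.sq_norm, Complex.normSq_apply, Complex.sub_re,
    Complex.sub_im, Complex.mul_re, Complex.mul_im, Complex.conj_re, Complex.conj_im,
    Complex.ofReal_re, Complex.ofReal_im]
  ring

lemma mul_conj_self (w : ℂ) : w * (starRingEnd ℂ) w = ((‖w‖^2 : ℝ) : ℂ) := by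
  simp [Complex.mul_conj, Complex.normSq_eq_norm_sq]

lemma integral_complex_re (ν : Measure ℝ) (f : ℝ → ℂ) (hf : Integrable f ν) :
    ∫ x, (f x).re ∂ν = (∫ x, f x ∂ν).re := by
  rw [← RCLike.re_to_complex, ← integral_re hf]
  simp

set_option maxHeartbeats 1000000 in
theorem kernel_derivative_norm_comparison
    (μ : Measure ℝ) [IsFiniteMeasure μ]
    (hsupp : μ (Set.Ioc 0 (2 * Real.pi))ᶜ = 0)
    (ε : ℝ) (hε : 0 < ε)
    (hSteklov : ENNReal.ofReal ε •
        ((ENNReal.ofReal (2 * Real.pi))⁻¹ • volume.restrict (Set.Ioc 0 (2 * Real.pi))) ≤ μ) :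
    ∃ c : ℝ, ∀ n j : ℕ, j ≤ n → ∀ cμ cm : ℕ → ℕ → ℂ,
      IsRepKernel μ n cμ →
      IsRepKernel ((ENNReal.ofReal (2 * Real.pi))⁻¹ • volume.restrict (Set.Ioc 0 (2 * Real.pi))) n cm →
      ∫ θ, ‖dbarKernel n j cμ (circlePt θ)‖ ^ 2 ∂μ ≤
        c * ∫ θ, ‖dbarKernel n j cm (circlePt θ)‖ ^ 2
              ∂((ENNReal.ofReal (2 * Real.pi))⁻¹ • volume.restrict (Set.Ioc 0 (2 * Real.pi))) := by
  set m : Measure ℝ := (ENNReal.ofReal (2 * Real.pi))⁻¹ • volume.restrict (Set.Ioc 0 (2 * Real.pi))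
    with hmdef
  haveI : IsFiniteMeasure m := by
    constructor
    rw [hmdef, Measure.smul_apply, Measure.restrict_apply_univ, Real.volume_Ioc, smul_eq_mul]
    exact ENNReal.mul_lt_top
      (ENNReal.inv_lt_top.mpr (by positivity)) ENNReal.ofReal_lt_top
  refine ⟨ε⁻¹, ?_⟩
  intro n j hj cμ cm hμrep hmrep
  set U : Polynomial ℂ := ∑ p ∈ Finset.range (n+1),
    Polynomial.C (∑ q ∈ Finset.range (n+1), cμ p q * (q.descFactorial j : ℂ)) * Polynomial.X ^ p
    with hUdef
  have hUeval : ∀ z : ℂ, U.eval z = dbarKernel n j cμ z := by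
    intro z
    rw [hUdef, Polynomial.eval_finset_sum]
    unfold dbarKernel
    refine Finset.sum_congr rfl fun p _ => ?_
    simp only [Polynomial.eval_mul, Polynomial.eval_C, Polynomial.eval_pow, Polynomial.eval_X,
      Finset.sum_mul]
  have hUdeg : U.natDegree ≤ n := by
    refine Polynomial.natDegree_sum_le_of_forall_le _ _ fun p hp => ?_
    exact le_trans (Polynomial.natDegree_C_mul_X_pow_le _ _)
      (Nat.lt_succ_iff.mp (Finset.mem_range.mp hp))
  set A : ℝ := ∫ θ, ‖dbarKernel n j cμ (circlePt θ)‖ ^ 2 ∂μ with hA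
  set B : ℝ := ∫ θ, ‖dbarKernel n j cμ (circlePt θ)‖ ^ 2 ∂m with hB
  set Cc : ℝ := ∫ θ, ‖dbarKernel n j cm (circlePt θ)‖ ^ 2 ∂m with hCc
  have hcu : Continuous (dbarKernel n j cμ) := continuous_dbarKernel n j cμ
  have hcv : Continuous (dbarKernel n j cm) := continuous_dbarKernel n j cm
  have hF1 : (A : ℂ) = ∑ q ∈ Finset.range (n+1), (q.descFactorial j : ℂ) * U.coeff q := by
    have h2 : ∫ θ, ((‖dbarKernel n j cμ (circlePt θ)‖ ^ 2 : ℝ) : ℂ) ∂μ = ((A : ℝ) : ℂ) := by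
      rw [hA]; exact integral_ofReal
    rw [← repKernel_integral μ n j cμ hμrep U hUdeg, ← h2]
    exact integral_congr_ae (Filter.Eventually.of_forall fun θ => by
      simp only [hUeval]; exact (mul_conj_self _).symm)
  have hF2 : ∫ θ, dbarKernel n j cμ (circlePt θ)
        * (starRingEnd ℂ) (dbarKernel n j cm (circlePt θ)) ∂m = (A : ℂ) := by
    rw [hF1, ← repKernel_integral m n j cm hmrep U hUdeg]
    exact integral_congr_ae (Filter.Eventually.of_forall fun θ => by simp only [hUeval])
  -- integrabilities
  have hiu2μ : Integrable (fun θ => ‖dbarKernel n j cμ (circlePt θ)‖ ^ 2) μ :=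
    integrable_comp_circle μ (h := fun z => ‖dbarKernel n j cμ z‖ ^ 2) (hcu.norm.pow 2)
  have hiu2m : Integrable (fun θ => ‖dbarKernel n j cμ (circlePt θ)‖ ^ 2) m :=
    integrable_comp_circle m (h := fun z => ‖dbarKernel n j cμ z‖ ^ 2) (hcu.norm.pow 2)
  have hiv2m : Integrable (fun θ => ‖dbarKernel n j cm (circlePt θ)‖ ^ 2) m :=
    integrable_comp_circle m (h := fun z => ‖dbarKernel n j cm z‖ ^ 2) (hcv.norm.pow 2)
  have hcuv : Continuous fun z => dbarKernel n j cμ z * (starRingEnd ℂ) (dbarKernel n j cm z) :=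
    hcu.mul (continuous_star.comp hcv)
  have hiuvm : Integrable (fun θ => dbarKernel n j cμ (circlePt θ)
      * (starRingEnd ℂ) (dbarKernel n j cm (circlePt θ))) m :=
    integrable_comp_circle m (h := fun z => dbarKernel n j cμ z * (starRingEnd ℂ) (dbarKernel n j cm z)) hcuv
  have hiuvrem : Integrable (fun θ => (dbarKernel n j cμ (circlePt θ)
      * (starRingEnd ℂ) (dbarKernel n j cm (circlePt θ))).re) m :=
    integrable_comp_circle m (h := fun z => (dbarKernel n j cμ z * (starRingEnd ℂ) (dbarKernel n j cm z)).re) (Complex.continuous_re.comp hcuv)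
  have hre : ∫ θ, (dbarKernel n j cμ (circlePt θ)
      * (starRingEnd ℂ) (dbarKernel n j cm (circlePt θ))).re ∂m = A := by
    rw [integral_complex_re m _ hiuvm, hF2, Complex.ofReal_re]
  -- Steklov inequality: ε * B ≤ A
  have hεB : ε * B ≤ A := by
    have h1 : ∫ θ, ‖dbarKernel n j cμ (circlePt θ)‖ ^ 2 ∂(ENNReal.ofReal ε • m) ≤ A :=
      integral_mono_measure hSteklov
        (Filter.Eventually.of_forall fun θ => by positivity) hiu2μ
    rwa [integral_smul_measure, ENNReal.toReal_ofReal hε.le, smul_eq_mul, ← hB] at h1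
  -- positivity of ‖ε u - v‖²
  have hnn : (0:ℝ) ≤ ∫ θ, ‖(ε:ℂ) * dbarKernel n j cμ (circlePt θ)
      - dbarKernel n j cm (circlePt θ)‖ ^ 2 ∂m :=
    integral_nonneg fun θ => sq_nonneg _
  have hexp : ∫ θ, ‖(ε:ℂ) * dbarKernel n j cμ (circlePt θ)
      - dbarKernel n j cm (circlePt θ)‖ ^ 2 ∂m = ε^2 * B - 2*ε*A + Cc := by
    simp_rw [norm_smul_sub_sq]
    have h1 : Integrable (fun θ => ε^2 * ‖dbarKernel n j cμ (circlePt θ)‖ ^ 2) m :=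
      hiu2m.const_mul _
    have h2 : Integrable (fun θ => 2*ε*(dbarKernel n j cμ (circlePt θ)
        * (starRingEnd ℂ) (dbarKernel n j cm (circlePt θ))).re) m :=
      hiuvrem.const_mul _
    have h12 : Integrable (fun θ => ε^2 * ‖dbarKernel n j cμ (circlePt θ)‖ ^ 2
        - 2*ε*(dbarKernel n j cμ (circlePt θ)
        * (starRingEnd ℂ) (dbarKernel n j cm (circlePt θ))).re) m := h1.sub h2
    rw [integral_add h12 hiv2m, integral_sub h1 h2,
      integral_const_mul, integral_const_mul, hre, ← hB, ← hCc]
  have hA0 : 0 ≤ A := integral_nonneg fun θ => sq_nonneg _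
  have hεA : ε * A ≤ Cc := by
    rw [hexp] at hnn
    nlinarith [mul_le_mul_of_nonneg_left hεB hε.le]
  rw [inv_mul_eq_div]
  exact (le_div_iff₀ hε).mpr (by linarith [hεA])
end

section
/- Let h : ℕ → (0, ∞) be any positive sequence, fix integers n ≥ 10 and 1 ≤ j ≤ n/2, and let n_j = ⌊(1 − 1/(j+1)) n⌋. Define S(h) = ∑_{r=n_j}^{n} h(r) · ( (j!/2^j) ∑_{t_1=0}^{n_j−1} ∑_{t_2=0}^{t_1−1} ⋯ ∑_{t_j=0}^{t_{j-1}−1} ∏_{s=1}^{j} (1 + h(t_s)/h(t_{s-1})) )², with t_0 = n_j. Then S(h) · S(1/h) ≥ κ_j(n_j)^4 · (∑_{r=n_j}^{n} h(r)) · (∑_{r=n_j}^{n} 1/h(r)), where κ_j(r) = r!/(r−j)! for r ≥ j. -/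
private lemma hockey (j : ℕ) : ∀ t : ℕ, ∑ s ∈ Finset.range t, (s.choose j : ℝ) = t.choose (j+1) := by
  intro t
  induction t with
  | zero => simp
  | succ t ih =>
    rw [Finset.sum_range_succ, ih]
    rw [Nat.choose_succ_succ']
    push_cast; ring

private lemma Gnonneg (G : (ℕ → ℝ) → ℕ → ℕ → ℝ)
    (hG0 : ∀ w t, G w 0 t = 1)
    (hGs : ∀ w j' t₀, G w (j' + 1) t₀ = ∑ t ∈ Finset.range t₀, (1 + w t / w t₀) * G w j' t)
    (w : ℕ → ℝ) (hw : ∀ k, 0 < w k) : ∀ jj t, 0 ≤ G w jj t := by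
  intro jj
  induction jj with
  | zero => intro t; rw [hG0]; norm_num
  | succ j ih =>
    intro t
    rw [hGs]
    apply Finset.sum_nonneg
    intro s _
    have := hw s; have := hw t
    have h1 : (0:ℝ) ≤ 1 + w s / w t := by positivity
    exact mul_nonneg h1 (ih s)

private lemma Gprod (G : (ℕ → ℝ) → ℕ → ℕ → ℝ)
    (hG0 : ∀ w t, G w 0 t = 1)
    (hGs : ∀ w j' t₀, G w (j' + 1) t₀ = ∑ t ∈ Finset.range t₀, (1 + w t / w t₀) * G w j' t)
    (w : ℕ → ℝ) (hw : ∀ k, 0 < w k) :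
    ∀ jj t, ((2:ℝ)^jj * t.choose jj)^2 ≤ G w jj t * G (fun k => (w k)⁻¹) jj t := by
  intro jj
  induction jj with
  | zero => intro t; rw [hG0, hG0]; simp
  | succ j ih =>
    intro t
    set v : ℕ → ℝ := fun k => (w k)⁻¹ with hv
    have hvpos : ∀ k, 0 < v k := fun k => inv_pos.2 (hw k)
    rw [hGs, hGs]
    set a : ℕ → ℝ := fun s => (1 + w s / w t) * G w j s with ha
    set b : ℕ → ℝ := fun s => (1 + v s / v t) * G v j s with hb
    have hanon : ∀ s, 0 ≤ a s := by
      intro s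
      have := hw s; have := hw t
      have h1 : (0:ℝ) ≤ 1 + w s / w t := by positivity
      exact mul_nonneg h1 (Gnonneg G hG0 hGs w hw j s)
    have hbnon : ∀ s, 0 ≤ b s := by
      intro s
      have := hvpos s; have := hvpos t
      have h1 : (0:ℝ) ≤ 1 + v s / v t := by positivity
      exact mul_nonneg h1 (Gnonneg G hG0 hGs v hvpos j s)
    -- per-term bound
    have hterm : ∀ s, ((2:ℝ)^(j+1) * s.choose j) ≤ Real.sqrt (a s * b s) := by
      intro s
      have hws := hw s; have hwt := hw t
      have hprod4 : (4:ℝ) ≤ (1 + w s / w t) * (1 + v s / v t) := by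
        have : v s / v t = w t / w s := by
          simp only [hv]
          field_simp
        rw [this]
        have h1 : (0:ℝ) < w s / w t := by positivity
        have h2 : (w s / w t) * (w t / w s) = 1 := by field_simp
        nlinarith [sq_nonneg (w s / w t - 1), sq_nonneg (w s / w t + 1)]
      have hab : ((2:ℝ)^(j+1) * s.choose j)^2 ≤ a s * b s := by
        have hGp := ih s
        have hcal : a s * b s = ((1 + w s / w t) * (1 + v s / v t)) * (G w j s * G v j s) := by
          ring
        rw [hcal]
        have hGn : (0:ℝ) ≤ G w j s * G v j s :=
          le_trans (sq_nonneg _) hGp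
        calc ((2:ℝ)^(j+1) * s.choose j)^2 = 4 * ((2:ℝ)^j * s.choose j)^2 := by ring
          _ ≤ 4 * (G w j s * G v j s) := by linarith
          _ ≤ ((1 + w s / w t) * (1 + v s / v t)) * (G w j s * G v j s) := by
              exact mul_le_mul_of_nonneg_right hprod4 hGn
      calc ((2:ℝ)^(j+1) * s.choose j) = Real.sqrt (((2:ℝ)^(j+1) * s.choose j)^2) := by
            rw [Real.sqrt_sq (by positivity)]
        _ ≤ Real.sqrt (a s * b s) := Real.sqrt_le_sqrt hab
    -- Cauchy–Schwarz
    have hCS : (∑ s ∈ Finset.range t, Real.sqrt (a s) * Real.sqrt (b s))^2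
        ≤ (∑ s ∈ Finset.range t, Real.sqrt (a s)^2) * (∑ s ∈ Finset.range t, Real.sqrt (b s)^2) :=
      Finset.sum_mul_sq_le_sq_mul_sq (Finset.range t) _ _
    have hsq : ∀ s, Real.sqrt (a s) * Real.sqrt (b s) = Real.sqrt (a s * b s) := by
      intro s; rw [Real.sqrt_mul (hanon s)]
    have hsum : ((2:ℝ)^(j+1) * t.choose (j+1)) ≤ ∑ s ∈ Finset.range t, Real.sqrt (a s * b s) := by
      have : ((2:ℝ)^(j+1) * t.choose (j+1)) = ∑ s ∈ Finset.range t, (2:ℝ)^(j+1) * s.choose j := by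
        rw [← Finset.mul_sum, hockey]
      rw [this]
      exact Finset.sum_le_sum (fun s _ => hterm s)
    have hfin : ((2:ℝ)^(j+1) * t.choose (j+1))^2
        ≤ (∑ s ∈ Finset.range t, a s) * (∑ s ∈ Finset.range t, b s) := by
      have h1 : ((2:ℝ)^(j+1) * t.choose (j+1))^2 ≤ (∑ s ∈ Finset.range t, Real.sqrt (a s * b s))^2 :=
        pow_le_pow_left₀ (by positivity) hsum 2
      calc ((2:ℝ)^(j+1) * t.choose (j+1))^2 ≤ (∑ s ∈ Finset.range t, Real.sqrt (a s * b s))^2 := h1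
        _ = (∑ s ∈ Finset.range t, Real.sqrt (a s) * Real.sqrt (b s))^2 := by
            congr 1; exact (Finset.sum_congr rfl (fun s _ => (hsq s).symm))
        _ ≤ (∑ s ∈ Finset.range t, Real.sqrt (a s)^2) * (∑ s ∈ Finset.range t, Real.sqrt (b s)^2) := hCS
        _ = (∑ s ∈ Finset.range t, a s) * (∑ s ∈ Finset.range t, b s) := by
            congr 1 <;> apply Finset.sum_congr rfl <;> intro s _
            · exact Real.sq_sqrt (hanon s)
            · exact Real.sq_sqrt (hbnon s)
    exact hfin

theorem core_product_estimate (h : ℕ → ℝ) (hpos : ∀ k, 0 < h k)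
    (n j : ℕ) (hn : 10 ≤ n) (hj : 1 ≤ j) (hjn : 2 * j ≤ n)
    -- `G w j t₀` is the iterated sum `∑_{t_1 < t₀} ⋯ ∑_{t_j < t_{j-1}}
    -- ∏_{s=1}^{j} (1 + w(t_s)/w(t_{s-1}))`.
    (G : (ℕ → ℝ) → ℕ → ℕ → ℝ)
    (hG0 : ∀ w t, G w 0 t = 1)
    (hGs : ∀ w j' t₀, G w (j' + 1) t₀ = ∑ t ∈ Finset.range t₀, (1 + w t / w t₀) * G w j' t) :
    ((∑ r ∈ Finset.Icc (n * j / (j + 1)) n,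
          h r * (((j.factorial : ℝ) / 2 ^ j) * G h j (n * j / (j + 1))) ^ 2) *
        (∑ r ∈ Finset.Icc (n * j / (j + 1)) n,
          (h r)⁻¹ *
            (((j.factorial : ℝ) / 2 ^ j) * G (fun k => (h k)⁻¹) j (n * j / (j + 1))) ^ 2)) ≥
      (((n * j / (j + 1)).descFactorial j : ℝ)) ^ 4 *
        (∑ r ∈ Finset.Icc (n * j / (j + 1)) n, h r) *
        (∑ r ∈ Finset.Icc (n * j / (j + 1)) n, (h r)⁻¹) := by
  set t₀ := n * j / (j + 1) with ht₀
  set A := ∑ r ∈ Finset.Icc t₀ n, h r with hA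
  set B := ∑ r ∈ Finset.Icc t₀ n, (h r)⁻¹ with hB
  set c : ℝ := (j.factorial : ℝ) / 2 ^ j with hc
  set G₁ := G h j t₀ with hG₁
  set G₂ := G (fun k => (h k)⁻¹) j t₀ with hG₂
  have hAnn : 0 ≤ A := Finset.sum_nonneg fun r _ => (hpos r).le
  have hBnn : 0 ≤ B := Finset.sum_nonneg fun r _ => (inv_pos.2 (hpos r)).le
  have hL1 : (∑ r ∈ Finset.Icc t₀ n, h r * (c * G₁) ^ 2) = A * (c * G₁)^2 := by
    rw [hA, ← Finset.sum_mul]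
  have hL2 : (∑ r ∈ Finset.Icc t₀ n, (h r)⁻¹ * (c * G₂) ^ 2) = B * (c * G₂)^2 := by
    rw [hB, ← Finset.sum_mul]
  rw [ge_iff_le, hL1, hL2]
  -- key bound
  have hGp : ((2:ℝ)^j * t₀.choose j)^2 ≤ G₁ * G₂ := Gprod G hG0 hGs h hpos j t₀
  have hdesc : (t₀.descFactorial j : ℝ) = (j.factorial : ℝ) * t₀.choose j := by
    rw [Nat.descFactorial_eq_factorial_mul_choose]; push_cast; ring
  have hkey : ((t₀.descFactorial j : ℝ))^2 ≤ c^2 * (G₁ * G₂) := by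
    have h2j : (0:ℝ) < 2^j := by positivity
    have hc2 : c^2 * ((2:ℝ)^j * t₀.choose j)^2 = ((t₀.descFactorial j : ℝ))^2 := by
      rw [hdesc, hc]
      field_simp
    calc ((t₀.descFactorial j : ℝ))^2 = c^2 * ((2:ℝ)^j * t₀.choose j)^2 := hc2.symm
      _ ≤ c^2 * (G₁ * G₂) := by
          apply mul_le_mul_of_nonneg_left hGp (by positivity)
  have hkey2 : ((t₀.descFactorial j : ℝ))^4 ≤ (c * G₁)^2 * (c * G₂)^2 := by
    have : (c * G₁)^2 * (c * G₂)^2 = (c^2 * (G₁ * G₂))^2 := by ring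
    rw [this]
    calc ((t₀.descFactorial j : ℝ))^4 = (((t₀.descFactorial j : ℝ))^2)^2 := by ring
      _ ≤ (c^2 * (G₁ * G₂))^2 := pow_le_pow_left₀ (by positivity) hkey 2
  calc ((t₀.descFactorial j : ℝ))^4 * A * B ≤ ((c * G₁)^2 * (c * G₂)^2) * A * B := by
        apply mul_le_mul_of_nonneg_right (mul_le_mul_of_nonneg_right hkey2 hAnn) hBnn
    _ = A * (c * G₁)^2 * (B * (c * G₂)^2) := by ring
end

section
/- Let h : ℕ → (0,∞) and suppose there is a constant C such that for all pairs (n, ℓ) with either ℓ = 0 or ℓ = ⌊(1 − 1/(j+1)) n⌋ for some integer 1 ≤ j ≤ n/2, one has ( (1/(n−ℓ)) ∑_{k=ℓ}^{n} h(k) ) · ( (1/(n−ℓ)) ∑_{k=ℓ}^{n} 1/h(k) ) ≤ C. Then there is a constant C' such that the same bound with C' holds for all integers n > ℓ ≥ 0. -/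
lemma special_exists (n ℓ : ℕ) (hln : ℓ < n) :
    ∃ l' : ℕ, l' ≤ ℓ ∧ n - l' ≤ 3 * (n - ℓ) ∧
      ((l' = 0 ∧ 1 ≤ n) ∨ ∃ j : ℕ, 1 ≤ j ∧ 2 * j ≤ n ∧ l' = n * j / (j + 1)) := by
  set m := n - ℓ with hm
  by_cases hc : n ≤ 2 * m
  · exact ⟨0, Nat.zero_le _, by omega, Or.inl ⟨rfl, by omega⟩⟩
  · have hm1 : 1 ≤ m := by omega
    have hmpos : 0 < m := hm1
    have hdm2 : 2 ≤ n / m := by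
      rw [Nat.le_div_iff_mul_le hmpos]; omega
    set j := min (n / m - 1) (n / 2) with hj
    have hj1 : 1 ≤ j := by
      have h2 : 1 ≤ n / 2 := by
        rw [Nat.le_div_iff_mul_le (by norm_num : 0 < 2)]; omega
      exact le_min (by omega) h2
    have hj2 : 2 * j ≤ n := by
      have := min_le_right (n / m - 1) (n / 2)
      have h2 : n / 2 * 2 ≤ n := Nat.div_mul_le_self n 2
      omega
    have hjm : j + 1 ≤ n / m := by
      have := min_le_left (n / m - 1) (n / 2)
      omega
    have hmul : m * (j + 1) ≤ n :=
      le_trans (Nat.mul_le_mul_left m hjm) (Nat.mul_div_le n m)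
    refine ⟨n * j / (j + 1), ?_, ?_, Or.inr ⟨j, hj1, hj2, rfl⟩⟩
    · -- n*j/(j+1) ≤ ℓ
      have hkey : n * j ≤ (n - m) * (j + 1) := by
        have e1 : (n - m) * (j + 1) = n * (j + 1) - m * (j + 1) := by
          rw [Nat.sub_mul]
        have e2 : n * (j + 1) = n * j + n := by ring
        omega
      have := Nat.div_le_div_right (c := j + 1) hkey
      rw [Nat.mul_div_cancel _ (by omega : 0 < j + 1)] at this
      omega
    · -- n - n*j/(j+1) ≤ 3*m
      by_cases hn3 : n ≤ 3 * m
      · exact le_trans (Nat.sub_le n _) hn3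
      · have hgoal : n ≤ 3 * (m * (j + 1)) := by
          rcases min_cases (n / m - 1) (n / 2) with ⟨hje, _⟩ | ⟨hje, hlt⟩
          · -- j = n/m - 1, so j + 1 = n/m
            have hje1 : j + 1 = n / m := by omega
            have hmod : m * (n / m) + n % m = n := Nat.div_add_mod n m
            have hr : n % m < m := Nat.mod_lt n hmpos
            have heq : m * (j + 1) = m * (n / m) := by rw [hje1]
            have h2m : 2 * m < n := by omega
            nlinarith
          · -- j = n/2
            have h2m : 2 * m < n := by omega
            have hje1 : j = n / 2 := by omega
            have h2 : 2 * (n / 2) + n % 2 = n := by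
              have := Nat.div_add_mod n 2; omega
            have hr2 : n % 2 < 2 := Nat.mod_lt n (by norm_num)
            have hjn : 2 * j + n % 2 = n := by rw [hje1]; omega
            nlinarith
        have hdiv : n - 3 * m ≤ n * j / (j + 1) := by
          rw [Nat.le_div_iff_mul_le (by omega : 0 < j + 1)]
          have e1 : (n - 3 * m) * (j + 1) = n * (j + 1) - 3 * m * (j + 1) := by
            rw [Nat.sub_mul]
          have e2 : n * (j + 1) = n * j + n := by ring
          have e3 : 3 * m * (j + 1) = 3 * (m * (j + 1)) := by ring
          omega
        omega

theorem muckenhoupt_from_special_pairs (h : ℕ → ℝ) (hpos : ∀ k, 0 < h k) (C : ℝ)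
    (hC : ∀ n ℓ : ℕ,
      ((ℓ = 0 ∧ 1 ≤ n) ∨ ∃ j : ℕ, 1 ≤ j ∧ 2 * j ≤ n ∧ ℓ = n * j / (j + 1)) →
      ((1 / ((n : ℝ) - ℓ)) * ∑ k ∈ Finset.Icc ℓ n, h k) *
        ((1 / ((n : ℝ) - ℓ)) * ∑ k ∈ Finset.Icc ℓ n, (h k)⁻¹) ≤ C) :
    ∃ C' : ℝ, ∀ n ℓ : ℕ, ℓ < n →
      ((1 / ((n : ℝ) - ℓ)) * ∑ k ∈ Finset.Icc ℓ n, h k) *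
        ((1 / ((n : ℝ) - ℓ)) * ∑ k ∈ Finset.Icc ℓ n, (h k)⁻¹) ≤ C' := by
  refine ⟨9 * C, ?_⟩
  intro n ℓ hln
  obtain ⟨l', hle, hfac, hspec⟩ := special_exists n ℓ hln
  have key := hC n l' hspec
  have hlen : l' < n := lt_of_le_of_lt hle hln
  set d : ℝ := (n : ℝ) - ℓ with hd
  set d' : ℝ := (n : ℝ) - l' with hd'
  have hdpos : 0 < d := by
    rw [hd]; have : (ℓ : ℝ) < n := by exact_mod_cast hln
    linarith
  have hd'pos : 0 < d' := by
    rw [hd']; have : (l' : ℝ) < n := by exact_mod_cast hlen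
    linarith
  have hd3 : d' ≤ 3 * d := by
    have h1 : ((n - l' : ℕ) : ℝ) ≤ ((3 * (n - ℓ) : ℕ) : ℝ) := by exact_mod_cast hfac
    rw [Nat.cast_sub hlen.le] at h1
    rw [Nat.cast_mul, Nat.cast_sub hln.le] at h1
    simpa [hd, hd'] using h1
  set A : ℝ := ∑ k ∈ Finset.Icc ℓ n, h k with hA
  set B : ℝ := ∑ k ∈ Finset.Icc ℓ n, (h k)⁻¹ with hB
  set A' : ℝ := ∑ k ∈ Finset.Icc l' n, h k with hA'
  set B' : ℝ := ∑ k ∈ Finset.Icc l' n, (h k)⁻¹ with hB'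
  have hsub : Finset.Icc ℓ n ⊆ Finset.Icc l' n := Finset.Icc_subset_Icc_left hle
  have hAA : A ≤ A' := Finset.sum_le_sum_of_subset_of_nonneg hsub
    (fun i _ _ => (hpos i).le)
  have hBB : B ≤ B' := Finset.sum_le_sum_of_subset_of_nonneg hsub
    (fun i _ _ => (inv_pos.mpr (hpos i)).le)
  have hApos : 0 ≤ A := Finset.sum_nonneg fun i _ => (hpos i).le
  have hBpos : 0 ≤ B := Finset.sum_nonneg fun i _ => (inv_pos.mpr (hpos i)).le
  have hA'pos : 0 ≤ A' := le_trans hApos hAA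
  have hB'pos : 0 ≤ B' := le_trans hBpos hBB
  have hfrac : 1 / d ≤ 3 / d' := by
    rw [div_le_div_iff₀ hdpos hd'pos]; linarith
  have step1 : (1 / d * A) * (1 / d * B) ≤ (3 / d' * A') * (3 / d' * B') := by
    have h1 : 1 / d * A ≤ 3 / d' * A' := by
      have := mul_le_mul hfrac hAA hApos (by positivity)
      linarith
    have h2 : 1 / d * B ≤ 3 / d' * B' := by
      have := mul_le_mul hfrac hBB hBpos (by positivity)
      linarith
    exact mul_le_mul h1 h2 (by positivity) (by positivity)
  have step2 : (3 / d' * A') * (3 / d' * B') = 9 * ((1 / d' * A') * (1 / d' * B')) := by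
    field_simp; ring
  calc (1 / d * A) * (1 / d * B) ≤ (3 / d' * A') * (3 / d' * B') := step1
    _ = 9 * ((1 / d' * A') * (1 / d' * B')) := step2
    _ ≤ 9 * C := by linarith [key]
end

section
/- Let (α_k)_{k≥0} be a sequence of reals with |α_k| < 1 and ∑_k α_k² < ∞, and let s_n = α_0 + ⋯ + α_n, h(n) = ∏_{k=0}^{n-1}(1−α_k)/(1+α_k). If sup_{n>ℓ≥0} ( (1/(n−ℓ)) ∑_{k=ℓ}^{n-1} h(k) ) · ( (1/(n−ℓ)) ∑_{k=ℓ}^{n-1} 1/h(k) ) < ∞, then sup_{n>ℓ≥0} ( (1/(n−ℓ)) ∑_{k=ℓ}^{n-1} e^{2 s_k} ) · ( (1/(n−ℓ)) ∑_{k=ℓ}^{n-1} e^{−2 s_k} ) < ∞. -/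
lemma logest (x : ℝ) (hx : |x| ≤ 1/2) :
    |Real.log ((1+x)/(1-x)) - 2*x| ≤ 4*x^2 := by
  have hx1 : |x| < 1 := lt_of_le_of_lt hx (by norm_num)
  have hx1' : |(-x)| < 1 := by rwa [abs_neg]
  have hp : (0:ℝ) < 1 + x := by
    have := abs_lt.1 hx1; linarith [this.1]
  have hm : (0:ℝ) < 1 - x := by
    have := abs_lt.1 hx1; linarith [this.2]
  have h1 := Real.abs_log_sub_add_sum_range_le hx1 1
  have h2 := Real.abs_log_sub_add_sum_range_le hx1' 1
  simp [Finset.sum_range_one] at h1 h2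
  -- h1 : |x + log (1 - x)| ≤ |x|^2 / (1 - |x|)
  -- h2 : |-x + log (1 + x)| ≤ |x|^2 / (1 - |x|)
  have hbound : x^2 / (1 - |x|) ≤ 2 * x^2 := by
    rw [div_le_iff₀ (by linarith)]
    nlinarith [abs_nonneg x, sq_nonneg x]
  rw [Real.log_div (by positivity) (by positivity)]
  have e1 : |x + Real.log (1-x)| ≤ 2 * x^2 := le_trans h1 hbound
  have e2 : |-x + Real.log (1+x)| ≤ 2 * x^2 := le_trans h2 hbound
  calc |Real.log (1+x) - Real.log (1-x) - 2*x|
      = |(-x + Real.log (1+x)) - (x + Real.log (1-x))| := by ring_nf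
    _ ≤ |-x + Real.log (1+x)| + |x + Real.log (1-x)| := abs_sub _ _
    _ ≤ 2*x^2 + 2*x^2 := add_le_add e2 e1
    _ = 4*x^2 := by ring

theorem muckenhoupt_transfer (α : ℕ → ℝ) (hα : ∀ k, |α k| < 1)
    (hsum : Summable fun k => (α k) ^ 2)
    (s : ℕ → ℝ) (hs : ∀ n, s n = ∑ k ∈ Finset.range (n + 1), α k)
    (h : ℕ → ℝ) (hh : ∀ n, h n = ∏ k ∈ Finset.range n, (1 - α k) / (1 + α k))
    (hyp : ∃ C : ℝ, ∀ ℓ n : ℕ, ℓ < n →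
      ((1 / ((n : ℝ) - ℓ)) * ∑ k ∈ Finset.Ico ℓ n, h k) *
        ((1 / ((n : ℝ) - ℓ)) * ∑ k ∈ Finset.Ico ℓ n, (h k)⁻¹) ≤ C) :
    ∃ C : ℝ, ∀ ℓ n : ℕ, ℓ < n →
      ((1 / ((n : ℝ) - ℓ)) * ∑ k ∈ Finset.Ico ℓ n, Real.exp (2 * s k)) *
        ((1 / ((n : ℝ) - ℓ)) * ∑ k ∈ Finset.Ico ℓ n, Real.exp (-2 * s k)) ≤ C := by
  obtain ⟨C, hC⟩ := hyp
  have hp : ∀ k, (0:ℝ) < 1 + α k := fun k => by have := abs_lt.1 (hα k); linarith [this.1]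
  have hm : ∀ k, (0:ℝ) < 1 - α k := fun k => by have := abs_lt.1 (hα k); linarith [this.2]
  have hpos : ∀ k, 0 < h k := by
    intro k; rw [hh k]
    exact Finset.prod_pos fun j _ => div_pos (hm j) (hp j)
  -- b j = log((1+α j)/(1-α j)) - 2 α j
  set b : ℕ → ℝ := fun j => Real.log ((1 + α j)/(1 - α j)) - 2 * α j with hb
  have hsb : Summable fun j => |b j| := by
    apply summable_of_isBigO_nat hsum
    rw [Asymptotics.isBigO_iff]
    refine ⟨4, ?_⟩
    have htend : Filter.Tendsto (fun k => (α k)^2) Filter.atTop (nhds 0) :=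
      hsum.tendsto_atTop_zero
    have hev : ∀ᶠ k in Filter.atTop, (α k)^2 ≤ (1/2:ℝ)^2 :=
      htend.eventually_le_const (show (0:ℝ) < (1/2)^2 by norm_num)
    filter_upwards [hev] with k hk
    have hk2 : |α k| ≤ 1/2 := by
      nlinarith [sq_abs (α k), abs_nonneg (α k)]
    have := logest (α k) hk2
    have h2 : ‖(α k)^2‖ = (α k)^2 := by
      rw [Real.norm_eq_abs, abs_of_nonneg (sq_nonneg _)]
    rw [Real.norm_eq_abs, abs_abs, h2]
    linarith
  set B := ∑' j, |b j| with hB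
  have hpart : ∀ k, |∑ j ∈ Finset.range k, b j| ≤ B := by
    intro k
    calc |∑ j ∈ Finset.range k, b j| ≤ ∑ j ∈ Finset.range k, |b j| :=
          Finset.abs_sum_le_sum_abs _ _
      _ ≤ B := Summable.sum_le_tsum _ (fun j _ => abs_nonneg _) hsb
  -- key bound: |2 s k + log (h k)| ≤ 2 + B
  set A : ℝ := 2 + B with hA
  have key : ∀ k, |2 * s k + Real.log (h k)| ≤ A := by
    intro k
    have hlog : Real.log (h k) = ∑ j ∈ Finset.range k, Real.log ((1 - α j)/(1 + α j)) := by
      rw [hh k]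
      exact Real.log_prod fun j _ => ne_of_gt (div_pos (hm j) (hp j))
    have hsk : 2 * s k = 2 * α k + ∑ j ∈ Finset.range k, 2 * α j := by
      rw [hs k, Finset.sum_range_succ, mul_add, Finset.mul_sum]; ring
    have hrw : 2 * s k + Real.log (h k) = 2 * α k - ∑ j ∈ Finset.range k, b j := by
      rw [hsk, hlog]
      have heq : ∑ j ∈ Finset.range k, 2 * α j +
          ∑ j ∈ Finset.range k, Real.log ((1 - α j)/(1 + α j))
          = ∑ j ∈ Finset.range k, -(b j) := by
        rw [← Finset.sum_add_distrib]
        refine Finset.sum_congr rfl fun j _ => ?_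
        have hinv : Real.log ((1 - α j)/(1 + α j)) = -Real.log ((1 + α j)/(1 - α j)) := by
          rw [← Real.log_inv, inv_div]
        rw [hinv, hb]; ring
      rw [Finset.sum_neg_distrib] at heq
      linarith
    rw [hrw, hA]
    calc |2 * α k - ∑ j ∈ Finset.range k, b j|
        ≤ |2 * α k| + |∑ j ∈ Finset.range k, b j| := abs_sub _ _
      _ ≤ 2 + B := by
          refine add_le_add ?_ (hpart k)
          rw [abs_mul, abs_two]
          nlinarith [hα k, abs_nonneg (α k)]
  have hexp1 : ∀ k, Real.exp (2 * s k) ≤ Real.exp A * (h k)⁻¹ := by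
    intro k
    have : Real.exp (2 * s k) = Real.exp (2 * s k + Real.log (h k)) * (h k)⁻¹ := by
      rw [Real.exp_add, Real.exp_log (hpos k), mul_assoc,
        mul_inv_cancel₀ (ne_of_gt (hpos k)), mul_one]
    rw [this]
    exact mul_le_mul_of_nonneg_right
      (Real.exp_le_exp.2 ((le_abs_self _).trans (key k)))
      (inv_nonneg.2 (hpos k).le)
  have hexp2 : ∀ k, Real.exp (-2 * s k) ≤ Real.exp A * h k := by
    intro k
    have : Real.exp (-2 * s k) = Real.exp (-(2 * s k + Real.log (h k))) * h k := by
      rw [Real.exp_neg, Real.exp_add, Real.exp_log (hpos k), mul_inv, neg_mul, Real.exp_neg,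
        mul_assoc, inv_mul_cancel₀ (ne_of_gt (hpos k)), mul_one]
    rw [this]
    exact mul_le_mul_of_nonneg_right
      (Real.exp_le_exp.2 ((neg_le_abs _).trans (key k)))
      (hpos k).le
  refine ⟨Real.exp A * Real.exp A * C, ?_⟩
  intro ℓ n hln
  have hd : (0:ℝ) < (n:ℝ) - ℓ := by
    have : (ℓ:ℝ) < n := by exact_mod_cast hln
    linarith
  have hfrac : (0:ℝ) ≤ 1 / ((n:ℝ) - ℓ) := by positivity
  have hS1 : ∑ k ∈ Finset.Ico ℓ n, Real.exp (2 * s k)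
      ≤ Real.exp A * ∑ k ∈ Finset.Ico ℓ n, (h k)⁻¹ := by
    rw [Finset.mul_sum]
    exact Finset.sum_le_sum fun k _ => hexp1 k
  have hS2 : ∑ k ∈ Finset.Ico ℓ n, Real.exp (-2 * s k)
      ≤ Real.exp A * ∑ k ∈ Finset.Ico ℓ n, h k := by
    rw [Finset.mul_sum]
    exact Finset.sum_le_sum fun k _ => hexp2 k
  have hnn1 : (0:ℝ) ≤ (1 / ((n:ℝ) - ℓ)) * ∑ k ∈ Finset.Ico ℓ n, Real.exp (2 * s k) := by
    apply mul_nonneg hfrac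
    exact Finset.sum_nonneg fun k _ => (Real.exp_pos _).le
  have hnn2 : (0:ℝ) ≤ Real.exp A * ((1 / ((n:ℝ) - ℓ)) * ∑ k ∈ Finset.Ico ℓ n, h k) := by
    apply mul_nonneg (Real.exp_pos _).le
    exact mul_nonneg hfrac (Finset.sum_nonneg fun k _ => (hpos k).le)
  have step1 : (1 / ((n:ℝ) - ℓ)) * ∑ k ∈ Finset.Ico ℓ n, Real.exp (2 * s k)
      ≤ Real.exp A * ((1 / ((n:ℝ) - ℓ)) * ∑ k ∈ Finset.Ico ℓ n, (h k)⁻¹) := by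
    rw [← mul_assoc, mul_comm (Real.exp A), mul_assoc]
    exact mul_le_mul_of_nonneg_left hS1 hfrac
  have step2 : (1 / ((n:ℝ) - ℓ)) * ∑ k ∈ Finset.Ico ℓ n, Real.exp (-2 * s k)
      ≤ Real.exp A * ((1 / ((n:ℝ) - ℓ)) * ∑ k ∈ Finset.Ico ℓ n, h k) := by
    rw [← mul_assoc, mul_comm (Real.exp A), mul_assoc]
    exact mul_le_mul_of_nonneg_left hS2 hfrac
  calc ((1 / ((n:ℝ) - ℓ)) * ∑ k ∈ Finset.Ico ℓ n, Real.exp (2 * s k)) *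
        ((1 / ((n:ℝ) - ℓ)) * ∑ k ∈ Finset.Ico ℓ n, Real.exp (-2 * s k))
      ≤ (Real.exp A * ((1 / ((n:ℝ) - ℓ)) * ∑ k ∈ Finset.Ico ℓ n, (h k)⁻¹)) *
        (Real.exp A * ((1 / ((n:ℝ) - ℓ)) * ∑ k ∈ Finset.Ico ℓ n, h k)) := by
        apply mul_le_mul step1 step2 ?_ ?_
        · exact mul_nonneg hfrac (Finset.sum_nonneg fun k _ => (Real.exp_pos _).le)
        · exact mul_nonneg (Real.exp_pos _).le
            (mul_nonneg hfrac (Finset.sum_nonneg fun k _ => inv_nonneg.2 (hpos k).le))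
    _ = Real.exp A * Real.exp A *
        (((1 / ((n:ℝ) - ℓ)) * ∑ k ∈ Finset.Ico ℓ n, h k) *
          ((1 / ((n:ℝ) - ℓ)) * ∑ k ∈ Finset.Ico ℓ n, (h k)⁻¹)) := by ring
    _ ≤ Real.exp A * Real.exp A * C := by
        apply mul_le_mul_of_nonneg_left (hC ℓ n hln)
        positivity
end
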